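/- Equilibrium of the position coupling implies the desired formation: let G be a connected simple graph on {1,…,N} with adjacency matrix a (a_ij = 1 if {i,j} is an edge, else 0), let β > 0, let q_1,…,q_N ∈ ℝ and p*_ij := q_i − q_j, and let p_1,…,p_N ∈ ℝ. If for every i ∈ {1,…,N} one has ∑_{j=1}^N a_ij·sig(p_i − p_j − p*_ij)^β = 0, then p_i − p_j = p*_ij for all i, j ∈ {1,…,N}. -/
import Mathlib


/-- `sig(x)^β := sign(x) · |x|^β`. -/
noncomputable def sig (x β : ℝ) : ℝ := Real.sign x * |x| ^ β

lemma sig_neg (x β : ℝ) : sig (-x) β = - sig x β := by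
  unfold sig
  rw [Real.sign_neg, abs_neg]
  ring

lemma sig_mul_self_pos {x : ℝ} (β : ℝ) (hx : x ≠ 0) : 0 < sig x β * x := by
  unfold sig
  rcases lt_or_gt_of_ne hx with hx' | hx'
  · rw [Real.sign_of_neg hx']
    have h1 : (0:ℝ) < |x| ^ β := Real.rpow_pos_of_pos (abs_pos.mpr hx) β
    nlinarith
  · rw [Real.sign_of_pos hx']
    have h1 : (0:ℝ) < |x| ^ β := Real.rpow_pos_of_pos (abs_pos.mpr hx) β
    nlinarith

lemma sig_mul_self_nonneg (x β : ℝ) : 0 ≤ sig x β * x := by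
  rcases eq_or_ne x 0 with rfl | hx
  · simp
  · exact (sig_mul_self_pos β hx).le

/-- Equilibrium of the position coupling implies the desired formation: on a
connected graph, if `∑ⱼ aᵢⱼ·sig(pᵢ−pⱼ−p*ᵢⱼ)^β = 0` for every `i`, then
`pᵢ − pⱼ = p*ᵢⱼ` for all `i, j`. -/
theorem equilibrium_implies_formation
    (N : ℕ) (G : SimpleGraph (Fin N)) [DecidableRel G.Adj] (hconn : G.Connected)
    (a : Fin N → Fin N → ℝ) (ha : ∀ i j, a i j = if G.Adj i j then 1 else 0)
    (β : ℝ) (hβ : 0 < β)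
    (q : Fin N → ℝ) (pstar : Fin N → Fin N → ℝ)
    (hps : ∀ i j, pstar i j = q i - q j)
    (p : Fin N → ℝ)
    (h : ∀ i, ∑ j, a i j * sig (p i - p j - pstar i j) β = 0) :
    ∀ i j, p i - p j = pstar i j := by
  set e : Fin N → ℝ := fun i => p i - q i with he
  have h' : ∀ i, ∑ j, a i j * sig (e i - e j) β = 0 := by
    intro i
    rw [← h i]
    refine Finset.sum_congr rfl fun j _ => ?_
    congr 2
    rw [hps, he]
    ring
  have hasymm : ∀ i j, a i j = a j i := by
    intro i j
    simp [ha, SimpleGraph.adj_comm]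
  have hanonneg : ∀ i j, 0 ≤ a i j := by
    intro i j
    rw [ha]
    split <;> norm_num
  have hT : ∑ i, ∑ j, a i j * (sig (e i - e j) β * (e i - e j)) = 0 := by
    have hA : ∑ i, ∑ j, a i j * sig (e i - e j) β * e i = 0 := by
      refine Finset.sum_eq_zero fun i _ => ?_
      rw [← Finset.sum_mul, h' i, zero_mul]
    have hB : ∑ i, ∑ j, a i j * sig (e i - e j) β * e j = 0 := by
      rw [Finset.sum_comm]
      refine Finset.sum_eq_zero fun j _ => ?_
      have : ∀ i, a i j * sig (e i - e j) β * e j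
          = -(a j i * sig (e j - e i) β * e j) := by
        intro i
        rw [hasymm i j]
        have : sig (e i - e j) β = - sig (e j - e i) β := by
          rw [← sig_neg]; ring_nf
        rw [this]; ring
      simp_rw [this]
      simp only [Finset.sum_neg_distrib]
      rw [← Finset.sum_mul, h' j]
      simp
    calc ∑ i, ∑ j, a i j * (sig (e i - e j) β * (e i - e j))
        = (∑ i, ∑ j, a i j * sig (e i - e j) β * e i)
          - ∑ i, ∑ j, a i j * sig (e i - e j) β * e j := by
          rw [← Finset.sum_sub_distrib]
          refine Finset.sum_congr rfl fun i _ => ?_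
          rw [← Finset.sum_sub_distrib]
          exact Finset.sum_congr rfl fun j _ => by ring
      _ = 0 := by rw [hA, hB, sub_zero]
  have key : ∀ i j, G.Adj i j → e i = e j := by
    intro i j hadj
    by_contra hne
    have hxne : e i - e j ≠ 0 := sub_ne_zero_of_ne hne
    have hterm : ∀ i ∈ Finset.univ, ∀ j ∈ Finset.univ,
        (0:ℝ) ≤ a i j * (sig (e i - e j) β * (e i - e j)) := fun i _ j _ =>
      mul_nonneg (hanonneg i j) (sig_mul_self_nonneg _ _)
    have h0 : ∀ i ∈ Finset.univ, (0:ℝ) ≤ ∑ j, a i j * (sig (e i - e j) β * (e i - e j)) :=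
      fun i _ => Finset.sum_nonneg fun j _ => hterm i (Finset.mem_univ i) j (Finset.mem_univ j)
    have h1 := (Finset.sum_eq_zero_iff_of_nonneg h0).mp hT i (Finset.mem_univ i)
    have h2 := (Finset.sum_eq_zero_iff_of_nonneg
      (fun j hj => hterm i (Finset.mem_univ i) j hj)).mp h1 j (Finset.mem_univ j)
    have haij : a i j = 1 := by rw [ha]; simp [hadj]
    rw [haij, one_mul] at h2
    exact absurd h2 (ne_of_gt (sig_mul_self_pos β hxne))
  have hreach : ∀ i j, G.Reachable i j → e i = e j := by
    intro i j hr
    obtain ⟨w⟩ := hr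
    induction w with
    | nil => rfl
    | cons hadj w ih => exact (key _ _ hadj).trans ih
  intro i j
  have := hreach i j (hconn.preconnected i j)
  rw [hps]
  simp only [he] at this
  linarith
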